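/- Let T be a contraction on a Hilbert space. If (I + T^m)/2 belongs to the weak limit semigroup of T for every sufficiently large m ∈ ℕ, then the weak limit semigroup of T is a convex set. -/

import Mathlib

open Filter

local notation "⟪" x ", " y "⟫" => @inner ℂ _ _ x y

/-- `S` belongs to the weak limit semigroup of `T`. -/
def IsWeakLimitOfPowers {H : Type*} [NormedAddCommGroup H] [InnerProductSpace ℂ H]
    (T S : H →L[ℂ] H) : Prop :=
  ∃ n : ℕ → ℕ, StrictMono n ∧
    ∀ x y : H, Tendsto (fun k => ⟪(T ^ n k) x, y⟫) atTop (nhds ⟪S x, y⟫)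

section Aux

variable {H : Type*} [NormedAddCommGroup H] [InnerProductSpace ℂ H]

lemma pow_apply_norm_le (T : H →L[ℂ] H) (hT : ‖T‖ ≤ 1) (p : ℕ) (x : H) :
    ‖(T ^ p) x‖ ≤ ‖x‖ := by
  induction p generalizing x with
  | zero => simp
  | succ n ih =>
    rw [pow_succ]
    calc ‖(T ^ n * T) x‖ = ‖(T ^ n) (T x)‖ := rfl
      _ ≤ ‖T x‖ := ih (T x)
      _ ≤ ‖T‖ * ‖x‖ := T.le_opNorm x
      _ ≤ 1 * ‖x‖ := by gcongr
      _ = ‖x‖ := one_mul _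

lemma pow_inner_bound (T : H →L[ℂ] H) (hT : ‖T‖ ≤ 1) (p : ℕ) (x y : H) :
    ‖⟪(T ^ p) x, y⟫‖ ≤ ‖x‖ * ‖y‖ :=
  (norm_inner_le_norm _ _).trans (by gcongr; exact pow_apply_norm_le T hT p x)

lemma weak_limit_inner_bound (T : H →L[ℂ] H) (hT : ‖T‖ ≤ 1) {S : H →L[ℂ] H}
    (h : IsWeakLimitOfPowers T S) (x y : H) : ‖⟪S x, y⟫‖ ≤ ‖x‖ * ‖y‖ := by
  obtain ⟨n, hn, hc⟩ := h
  exact le_of_tendsto ((hc x y).norm)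
    (Filter.Eventually.of_forall fun k => pow_inner_bound T hT (n k) x y)

lemma weak_limit_mul_pow (T : H →L[ℂ] H) {A : H →L[ℂ] H}
    (h : IsWeakLimitOfPowers T A) (M : ℕ) : IsWeakLimitOfPowers T (A * T ^ M) := by
  obtain ⟨n, hn, hc⟩ := h
  refine ⟨fun k => n k + M, fun i j hij => by simpa using hn hij, fun x y => ?_⟩
  have : ∀ k, ⟪(T ^ (n k + M)) x, y⟫ = ⟪(T ^ n k) ((T ^ M) x), y⟫ := by
    intro k; rw [pow_add]; rfl
  simp only [this]
  exact hc ((T ^ M) x) y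

/-- Bilinear perturbation estimate. -/
lemma inner_pert {B : H →L[ℂ] H} (hB : ∀ u v : H, ‖⟪B u, v⟫‖ ≤ ‖u‖ * ‖v‖)
    (x y u v : H) : ‖⟪B x, y⟫ - ⟪B u, v⟫‖ ≤ ‖x - u‖ * ‖y‖ + ‖u‖ * ‖y - v‖ := by
  have key : ⟪B x, y⟫ - ⟪B u, v⟫ = ⟪B (x - u), y⟫ + ⟪B u, y - v⟫ := by
    rw [map_sub, inner_sub_left, inner_sub_right]; ring
  rw [key]
  calc ‖⟪B (x - u), y⟫ + ⟪B u, y - v⟫‖ ≤ ‖⟪B (x - u), y⟫‖ + ‖⟪B u, y - v⟫‖ :=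
        norm_add_le _ _
    _ ≤ ‖x - u‖ * ‖y‖ + ‖u‖ * ‖y - v‖ := add_le_add (hB _ _) (hB _ _)

lemma weak_limit_closed [TopologicalSpace.SeparableSpace H]
    (T : H →L[ℂ] H) (hT : ‖T‖ ≤ 1) (S : ℕ → (H →L[ℂ] H))
    (hS : ∀ j, IsWeakLimitOfPowers T (S j)) (L : H →L[ℂ] H)
    (hconv : ∀ x y : H, Tendsto (fun j => ⟪(S j) x, y⟫) atTop (nhds ⟪L x, y⟫)) :
    IsWeakLimitOfPowers T L := by
  haveI : Nonempty H := ⟨0⟩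
  set e : ℕ → H := TopologicalSpace.denseSeq H with he
  have hdense : DenseRange e := TopologicalSpace.denseRange_denseSeq H
  -- selection claim
  have claim : ∀ j M : ℕ, ∃ N : ℕ, M < N ∧ ∀ a ≤ j, ∀ b ≤ j,
      ‖⟪(T ^ N) (e a), e b⟫ - ⟪(S j) (e a), e b⟫‖ < 1 / (j + 1 : ℝ) := by
    intro j M
    obtain ⟨q, hq, hc⟩ := hS j
    have hpos : (0 : ℝ) < 1 / (j + 1 : ℝ) := by positivity
    have hev : ∀ a ≤ j, ∀ b ≤ j, ∀ᶠ k in atTop,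
        ‖⟪(T ^ q k) (e a), e b⟫ - ⟪(S j) (e a), e b⟫‖ < 1 / (j + 1 : ℝ) := by
      intro a _ b _
      have := (hc (e a) (e b)).eventually (Metric.ball_mem_nhds _ hpos)
      simpa [Metric.mem_ball, dist_eq_norm] using this
    have hev2 : ∀ᶠ k in atTop, ∀ a ∈ Finset.range (j + 1), ∀ b ∈ Finset.range (j + 1),
        ‖⟪(T ^ q k) (e a), e b⟫ - ⟪(S j) (e a), e b⟫‖ < 1 / (j + 1 : ℝ) := by
      rw [Filter.eventually_all_finset]
      intro a ha
      rw [Filter.eventually_all_finset]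
      intro b hb
      exact hev a (Nat.lt_succ_iff.mp (Finset.mem_range.mp ha)) b
        (Nat.lt_succ_iff.mp (Finset.mem_range.mp hb))
    have hev3 : ∀ᶠ k in atTop, M < q k := hq.tendsto_atTop.eventually_gt_atTop M
    obtain ⟨k, hk1, hk2⟩ := (hev3.and hev2).exists
    exact ⟨q k, hk1, fun a ha b hb =>
      hk2 a (Finset.mem_range.mpr (Nat.lt_succ_of_le ha))
        b (Finset.mem_range.mpr (Nat.lt_succ_of_le hb))⟩
  choose! F hF1 hF2 using claim
  set N : ℕ → ℕ := fun j => Nat.rec (F 0 0) (fun j ih => F (j + 1) ih) j with hN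
  have hNsucc : ∀ j, N (j + 1) = F (j + 1) (N j) := fun j => rfl
  have hNmono : StrictMono N := strictMono_nat_of_lt_succ fun j => by
    rw [hNsucc]; exact hF1 (j + 1) (N j)
  have hNprop : ∀ j, ∀ a ≤ j, ∀ b ≤ j,
      ‖⟪(T ^ N j) (e a), e b⟫ - ⟪(S j) (e a), e b⟫‖ < 1 / (j + 1 : ℝ) := by
    intro j
    cases j with
    | zero => exact hF2 0 0
    | succ j => rw [hNsucc]; exact hF2 (j + 1) (N j)
  refine ⟨N, hNmono, fun x y => ?_⟩
  -- bounds
  have hbS : ∀ j (u v : H), ‖⟪(S j) u, v⟫‖ ≤ ‖u‖ * ‖v‖ := fun j =>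
    weak_limit_inner_bound T hT (hS j)
  have hbL : ∀ u v : H, ‖⟪L u, v⟫‖ ≤ ‖u‖ * ‖v‖ := fun u v =>
    le_of_tendsto ((hconv u v).norm) (Filter.Eventually.of_forall fun j => hbS j u v)
  rw [Metric.tendsto_atTop]
  intro ε hε
  set C : ℝ := ‖x‖ + ‖y‖ + 2 with hC
  have hCpos : 0 < C := by positivity
  set δ : ℝ := min 1 (ε / (8 * C)) with hδ
  have hδpos : 0 < δ := lt_min one_pos (by positivity)
  obtain ⟨a, ha⟩ := hdense.exists_dist_lt x hδpos
  obtain ⟨b, hb⟩ := hdense.exists_dist_lt y hδpos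
  rw [dist_eq_norm] at ha hb
  -- perturbation bound for any B with the bilinear bound
  have pert : ∀ (B : H →L[ℂ] H), (∀ u v : H, ‖⟪B u, v⟫‖ ≤ ‖u‖ * ‖v‖) →
      ‖⟪B x, y⟫ - ⟪B (e a), e b⟫‖ ≤ ε / 8 := by
    intro B hB
    have h1 := inner_pert hB x y (e a) (e b)
    have hea : ‖e a‖ ≤ ‖x‖ + 1 := by
      calc ‖e a‖ = ‖x - (x - e a)‖ := by rw [sub_sub_cancel]
        _ ≤ ‖x‖ + ‖x - e a‖ := norm_sub_le _ _
        _ ≤ ‖x‖ + 1 := by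
            have : ‖x - e a‖ ≤ 1 := le_of_lt (lt_of_lt_of_le ha (min_le_left _ _))
            linarith
    have hδ2 : δ ≤ ε / (8 * C) := min_le_right _ _
    have key : ‖x - e a‖ * ‖y‖ + ‖e a‖ * ‖y - e b‖ ≤ δ * C := by
      have h2 : ‖x - e a‖ * ‖y‖ ≤ δ * ‖y‖ := by
        apply mul_le_mul_of_nonneg_right (le_of_lt ha) (norm_nonneg _)
      have h3 : ‖e a‖ * ‖y - e b‖ ≤ (‖x‖ + 1) * δ :=
        mul_le_mul hea (le_of_lt hb) (norm_nonneg _) (by positivity)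
      calc ‖x - e a‖ * ‖y‖ + ‖e a‖ * ‖y - e b‖ ≤ δ * ‖y‖ + (‖x‖ + 1) * δ := by linarith
        _ ≤ δ * C := by rw [hC]; nlinarith [hδpos.le, norm_nonneg x, norm_nonneg y]
    have : δ * C ≤ ε / 8 := by
      calc δ * C ≤ (ε / (8 * C)) * C := by
            apply mul_le_mul_of_nonneg_right hδ2 hCpos.le
        _ = ε / 8 := by field_simp
    exact h1.trans (key.trans this)
  -- choose J
  have ev1 : ∀ᶠ j in atTop, ‖⟪(S j) (e a), e b⟫ - ⟪L (e a), e b⟫‖ < ε / 4 := by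
    have := (hconv (e a) (e b)).eventually (Metric.ball_mem_nhds _ (by positivity : (0:ℝ) < ε / 4))
    simpa [Metric.mem_ball, dist_eq_norm] using this
  have ev2 : ∀ᶠ j : ℕ in atTop, 1 / (j + 1 : ℝ) < ε / 4 :=
    tendsto_one_div_add_atTop_nhds_zero_nat.eventually_lt_const (by positivity)
  have ev3 : ∀ᶠ j in atTop, a ≤ j ∧ b ≤ j :=
    (eventually_ge_atTop a).and (eventually_ge_atTop b)
  obtain ⟨J, hJ⟩ := Filter.eventually_atTop.mp ((ev1.and ev2).and ev3)
  refine ⟨J, fun j hj => ?_⟩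
  obtain ⟨⟨hJ1, hJ2⟩, hJ3, hJ4⟩ := hJ j hj
  have hmid := hNprop j a hJ3 b hJ4
  have hTb : ∀ u v : H, ‖⟪(T ^ N j) u, v⟫‖ ≤ ‖u‖ * ‖v‖ := pow_inner_bound T hT (N j)
  have p1 := pert (T ^ N j) hTb
  have p2 := pert L hbL
  rw [dist_eq_norm]
  have decomp : ⟪(T ^ N j) x, y⟫ - ⟪L x, y⟫ =
      (⟪(T ^ N j) x, y⟫ - ⟪(T ^ N j) (e a), e b⟫)
      + (⟪(T ^ N j) (e a), e b⟫ - ⟪(S j) (e a), e b⟫)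
      + (⟪(S j) (e a), e b⟫ - ⟪L (e a), e b⟫)
      + (⟪L (e a), e b⟫ - ⟪L x, y⟫) := by ring
  rw [decomp]
  have p2' : ‖⟪L (e a), e b⟫ - ⟪L x, y⟫‖ ≤ ε / 8 := by
    rw [norm_sub_rev]; exact p2
  calc ‖_ + _ + _ + _‖ ≤ ‖_ + _ + _‖ + ‖⟪L (e a), e b⟫ - ⟪L x, y⟫‖ := norm_add_le _ _
    _ ≤ (‖_ + _‖ + ‖⟪(S j) (e a), e b⟫ - ⟪L (e a), e b⟫‖) + ‖⟪L (e a), e b⟫ - ⟪L x, y⟫‖ := by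
        gcongr; exact norm_add_le _ _
    _ ≤ ((‖⟪(T ^ N j) x, y⟫ - ⟪(T ^ N j) (e a), e b⟫‖
        + ‖⟪(T ^ N j) (e a), e b⟫ - ⟪(S j) (e a), e b⟫‖)
        + ‖⟪(S j) (e a), e b⟫ - ⟪L (e a), e b⟫‖) + ‖⟪L (e a), e b⟫ - ⟪L x, y⟫‖ := by
        gcongr; exact norm_add_le _ _
    _ < ε := by
        have h4 : 1 / (j + 1 : ℝ) < ε / 4 := hJ2
        linarith [p1, p2', hmid, hJ1]

lemma half_smul_inner (A B : H →L[ℂ] H) (x y : H) :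
    ⟪((1 / 2 : ℂ) • (A + B)) x, y⟫ = (1 / 2 : ℂ) * (⟪A x, y⟫ + ⟪B x, y⟫) := by
  have : ((1 / 2 : ℂ) • (A + B)) x = (1 / 2 : ℂ) • (A x + B x) := by
    simp [ContinuousLinearMap.add_apply]
  rw [this, inner_smul_left, inner_add_left]
  have hc : (starRingEnd ℂ) (1 / 2 : ℂ) = 1 / 2 := by
    simp [map_div₀, Complex.conj_ofNat]
  rw [hc]

set_option maxHeartbeats 1000000 in
lemma weak_limit_midpoint [TopologicalSpace.SeparableSpace H]
    (T : H →L[ℂ] H) (hT : ‖T‖ ≤ 1)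
    (hmid : ∃ k₀ : ℕ, ∀ k ≥ k₀, IsWeakLimitOfPowers T ((1 / 2 : ℂ) • (1 + T ^ k)))
    {V W : H →L[ℂ] H} (hV : IsWeakLimitOfPowers T V) (hW : IsWeakLimitOfPowers T W) :
    IsWeakLimitOfPowers T ((1 / 2 : ℂ) • (V + W)) := by
  obtain ⟨k₀, hk⟩ := hmid
  obtain ⟨n, hn, hnc⟩ := hV
  obtain ⟨m, hm, hmc⟩ := hW
  -- define S j = (1/2) • (T^(m j) + T^(n (m j + k₀)))
  set d : ℕ → ℕ := fun j => n (m j + k₀) - m j with hd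
  have hdk : ∀ j, k₀ ≤ d j := by
    intro j
    have h1 : m j + k₀ ≤ n (m j + k₀) := hn.le_apply
    show k₀ ≤ n (m j + k₀) - m j
    omega
  have hdm : ∀ j, d j + m j = n (m j + k₀) := by
    intro j
    have h1 : m j + k₀ ≤ n (m j + k₀) := hn.le_apply
    show n (m j + k₀) - m j + m j = n (m j + k₀)
    omega
  set S : ℕ → (H →L[ℂ] H) := fun j => ((1 / 2 : ℂ) • (1 + T ^ d j)) * T ^ m j with hSdef
  have hSmem : ∀ j, IsWeakLimitOfPowers T (S j) :=
    fun j => weak_limit_mul_pow T (hk (d j) (hdk j)) (m j)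
  have hSeq : ∀ j, S j = (1 / 2 : ℂ) • (T ^ m j + T ^ n (m j + k₀)) := by
    intro j
    rw [hSdef]
    simp only [smul_mul_assoc, add_mul, one_mul, ← pow_add, hdm j]
  apply weak_limit_closed T hT S hSmem
  intro x y
  have e1 : ∀ j, ⟪(S j) x, y⟫
      = (1 / 2 : ℂ) * (⟪(T ^ m j) x, y⟫ + ⟪(T ^ n (m j + k₀)) x, y⟫) := by
    intro j; rw [hSeq j]; exact half_smul_inner _ _ x y
  have e2 : ⟪((1 / 2 : ℂ) • (V + W)) x, y⟫ = (1 / 2 : ℂ) * (⟪W x, y⟫ + ⟪V x, y⟫) := by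
    rw [half_smul_inner V W x y]; ring
  simp only [e1, e2]
  have hsub : Tendsto (fun j => ⟪(T ^ n (m j + k₀)) x, y⟫) atTop (nhds ⟪V x, y⟫) := by
    have hmono : Tendsto (fun j => m j + k₀) atTop atTop :=
      tendsto_atTop_mono (fun j => Nat.le_add_right (m j) k₀) hm.tendsto_atTop
    exact (hnc x y).comp hmono
  exact ((hmc x y).add hsub).const_mul _

/-- Convex combination operator. -/
noncomputable def cvx (V W : H →L[ℂ] H) (t : ℝ) : H →L[ℂ] H :=
  (t : ℂ) • V + ((1 - t : ℝ) : ℂ) • W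

lemma cvx_midpoint (V W : H →L[ℂ] H) (a b : ℝ) :
    (1 / 2 : ℂ) • (cvx V W a + cvx V W b) = cvx V W ((a + b) / 2) := by
  unfold cvx
  push_cast
  module

lemma cvx_inner (V W : H →L[ℂ] H) (t : ℝ) (x y : H) :
    ⟪(cvx V W t) x, y⟫ = (t : ℂ) * ⟪V x, y⟫ + ((1 - t : ℝ) : ℂ) * ⟪W x, y⟫ := by
  unfold cvx
  simp only [ContinuousLinearMap.add_apply, ContinuousLinearMap.coe_smul', Pi.smul_apply]
  rw [inner_add_left, inner_smul_left, inner_smul_left, Complex.conj_ofReal,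
    Complex.conj_ofReal]


end Aux

/-- If `(I + T^k)/2` belongs to the weak limit semigroup of the contraction `T` for all
sufficiently large `k`, then the weak limit semigroup of `T` is convex. -/
theorem stmt_8 {H : Type*} [NormedAddCommGroup H] [InnerProductSpace ℂ H]
    [TopologicalSpace.SeparableSpace H] [CompleteSpace H]
    (T : H →L[ℂ] H) (hT : ‖T‖ ≤ 1)
    (hmid : ∃ k₀ : ℕ, ∀ k ≥ k₀, IsWeakLimitOfPowers T ((1 / 2 : ℂ) • (1 + T ^ k))) :
    ∀ V W : H →L[ℂ] H, IsWeakLimitOfPowers T V → IsWeakLimitOfPowers T W →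
      ∀ t : ℝ, 0 ≤ t → t ≤ 1 →
        IsWeakLimitOfPowers T ((t : ℂ) • V + ((1 - t : ℝ) : ℂ) • W) := by
  intro V W hV hW t ht0 ht1
  set P : ℝ → Prop := fun s => IsWeakLimitOfPowers T (cvx V W s) with hP
  have hP0 : P 0 := by
    have : cvx V W 0 = W := by unfold cvx; push_cast; module
    rw [hP]; simpa [this] using hW
  have hP1 : P 1 := by
    have : cvx V W 1 = V := by unfold cvx; push_cast; module
    rw [hP]; simpa [this] using hV
  have hPmid : ∀ a b : ℝ, P a → P b → P ((a + b) / 2) := by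
    intro a b ha hb
    have := weak_limit_midpoint T hT hmid ha hb
    rwa [cvx_midpoint] at this
  -- dyadic rationals
  have hdy : ∀ r : ℕ, ∀ j : ℕ, j ≤ 2 ^ r → P ((j : ℝ) / 2 ^ r) := by
    intro r
    induction r with
    | zero =>
      intro j hj
      interval_cases j
      · simpa using hP0
      · simpa using hP1
    | succ r ih =>
      intro j hj
      rcases Nat.even_or_odd j with ⟨i, hi⟩ | ⟨i, hi⟩
      · have hi2 : i ≤ 2 ^ r := by subst hi; rw [pow_succ] at hj; omega
        have := ih i hi2
        have heq : ((j : ℝ) / 2 ^ (r + 1)) = (i : ℝ) / 2 ^ r := by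
          subst hi; push_cast; rw [pow_succ]; field_simp; ring
        rwa [heq]
      · have hi2 : i + 1 ≤ 2 ^ r := by subst hi; rw [pow_succ] at hj; omega
        have h1 := ih i (le_trans (Nat.le_succ i) hi2)
        have h2 := ih (i + 1) hi2
        have := hPmid _ _ h1 h2
        have heq : (((i : ℝ) / 2 ^ r) + ((i + 1 : ℕ) : ℝ) / 2 ^ r) / 2 = (j : ℝ) / 2 ^ (r + 1) := by
          subst hi; push_cast; rw [pow_succ]; field_simp; ring
        rwa [heq] at this
  -- approximate t by dyadics
  set tr : ℕ → ℝ := fun r => (⌊t * 2 ^ r⌋₊ : ℝ) / 2 ^ r with htr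
  have hfl : ∀ r : ℕ, ⌊t * 2 ^ r⌋₊ ≤ 2 ^ r := by
    intro r
    have h1 : t * 2 ^ r ≤ (2 ^ r : ℝ) := by nlinarith [pow_pos (by norm_num : (0:ℝ) < 2) r]
    calc ⌊t * 2 ^ r⌋₊ ≤ ⌊(2 ^ r : ℝ)⌋₊ := Nat.floor_mono h1
      _ = 2 ^ r := by
          rw [show ((2:ℝ) ^ r) = ((2 ^ r : ℕ) : ℝ) by push_cast; ring, Nat.floor_natCast]
  have hPr : ∀ r, P (tr r) := fun r => hdy r _ (hfl r)
  have htend : Tendsto tr atTop (nhds t) := by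
    have hb : ∀ r : ℕ, |tr r - t| ≤ ((1:ℝ)/2) ^ r := by
      intro r
      have h2pos : (0:ℝ) < 2 ^ r := pow_pos (by norm_num) r
      have hle : (⌊t * 2 ^ r⌋₊ : ℝ) ≤ t * 2 ^ r := Nat.floor_le (by positivity)
      have hlt : t * 2 ^ r < (⌊t * 2 ^ r⌋₊ : ℝ) + 1 := Nat.lt_floor_add_one _
      have e1 : ((1:ℝ)/2) ^ r = 1 / 2 ^ r := by rw [div_pow]; norm_num
      have e2 : tr r = (⌊t * 2 ^ r⌋₊ : ℝ) / 2 ^ r := rfl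
      rw [abs_le, e1, e2]
      constructor
      · rw [neg_le, neg_sub, sub_le_iff_le_add, ← add_div, le_div_iff₀ h2pos]
        linarith
      · have h3 : (⌊t * 2 ^ r⌋₊ : ℝ) / 2 ^ r ≤ t := by
          rw [div_le_iff₀ h2pos]; exact hle
        have h4 : (0:ℝ) < 1 / 2 ^ r := by positivity
        linarith
    have hz : Tendsto (fun r : ℕ => ((1:ℝ)/2) ^ r) atTop (nhds 0) :=
      tendsto_pow_atTop_nhds_zero_of_lt_one (by norm_num) (by norm_num)
    have : Tendsto (fun r => |tr r - t|) atTop (nhds 0) :=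
      squeeze_zero (fun r => abs_nonneg _) hb hz
    rw [tendsto_iff_dist_tendsto_zero]
    simpa [Real.dist_eq] using this
  -- pass to the limit
  have : P t := by
    rw [hP]
    apply weak_limit_closed T hT (fun r => cvx V W (tr r)) hPr
    intro x y
    simp only [cvx_inner]
    have h1 : Tendsto (fun r => ((tr r : ℝ) : ℂ)) atTop (nhds ((t : ℝ) : ℂ)) :=
      (Complex.continuous_ofReal.tendsto _).comp htend
    have h2 : Tendsto (fun r => (((1 - tr r : ℝ)) : ℂ)) atTop (nhds (((1 - t : ℝ)) : ℂ)) :=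
      (Complex.continuous_ofReal.tendsto _).comp (tendsto_const_nhds.sub htend)
    exact ((h1.mul tendsto_const_nhds).add (h2.mul tendsto_const_nhds))
  rw [hP] at this
  exact this
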